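/- For every σ ≥ 1 and every multi-index α ∈ ℕ^d, ∫_{ℝ^d} |D^α_x(e^{-σ²|x|²})|² dx ≤ σ^{2|α| − d} 2^{|α|} α! π^{d/2}. -/

import Mathlib

open MeasureTheory Real

/-- Partial derivative in the `i`-th coordinate. -/
noncomputable def pderiv' {d : ℕ} (i : Fin d) (f : (Fin d → ℝ) → ℝ) : (Fin d → ℝ) → ℝ :=
  fun x => deriv (fun t => f (Function.update x i t)) (x i)

/-- The multi-index derivative `D^α = ∏ᵢ ∂ᵢ^{αᵢ}`. -/
noncomputable def mderiv {d : ℕ} (α : Fin d → ℕ) (f : (Fin d → ℝ) → ℝ) : (Fin d → ℝ) → ℝ :=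
  (List.finRange d).foldr (fun i g => (pderiv' i)^[α i] g) f

section Aux

open Polynomial

lemma iter_deriv_poly (n : ℕ) : ∀ p : ℝ[X], p.natDegree ≤ n →
    derivative^[n] p = C ((n.factorial : ℝ) * p.coeff n) := by
  induction n with
  | zero => intro p hp; simpa using (Polynomial.eq_C_of_natDegree_le_zero hp)
  | succ n ih =>
    intro p hp
    rw [Function.iterate_succ_apply, ih (derivative p)
      (le_trans (Polynomial.natDegree_derivative_le p) (by omega)),
      Polynomial.coeff_derivative]
    congr 1
    push_cast [Nat.factorial_succ]
    ring


lemma integrable_poly_gaussian (p : ℝ[X]) {b : ℝ} (hb : 0 < b) :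
    Integrable (fun x : ℝ => aeval x p * Real.exp (-b * x ^ 2)) := by
  have h1 : ∀ k : ℕ, Integrable (fun x : ℝ => x ^ k * Real.exp (-b * x ^ 2)) := by
    intro k
    have := integrable_rpow_mul_exp_neg_mul_sq hb (s := (k:ℝ))
      (lt_of_lt_of_le neg_one_lt_zero (Nat.cast_nonneg k))
    simpa [Real.rpow_natCast] using this
  have : (fun x : ℝ => aeval x p * Real.exp (-b * x ^ 2))
      = fun x => ∑ k ∈ Finset.range (p.natDegree + 1), p.coeff k * (x ^ k * Real.exp (-b * x ^ 2)) := by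
    funext x
    rw [Polynomial.aeval_eq_sum_range, Finset.sum_mul]
    simp [smul_eq_mul, mul_assoc]
  rw [this]
  exact integrable_finset_sum _ fun k _ => (h1 k).const_mul _

noncomputable def gss : ℝ → ℝ := fun y => Real.exp (-(y ^ 2 / 2))

lemma gss_eq (x : ℝ) : gss x = Real.exp (-(1/2 : ℝ) * x ^ 2) := by
  unfold gss; ring_nf

lemma deriv_gss (n : ℕ) : deriv^[n] gss = fun x =>
    (-1 : ℝ) ^ n * aeval x (hermite n) * gss x := by
  funext x
  exact Polynomial.deriv_gaussian_eq_hermite_mul_gaussian n x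

lemma integrable_poly_deriv_gss (p : ℝ[X]) (n : ℕ) :
    Integrable (fun x : ℝ => aeval x p * deriv^[n] gss x) := by
  rw [deriv_gss]
  have : (fun x : ℝ => aeval x p * ((-1:ℝ) ^ n * aeval x (hermite n) * gss x))
      = fun x => aeval x ((-1:ℝ)^n • (p * (hermite n).map (Int.castRingHom ℝ))) *
        Real.exp (-(1/2:ℝ) * x ^ 2) := by
    funext x
    rw [← gss_eq]
    simp only [_root_.map_smul, smul_eq_mul, _root_.map_mul]
    have : (aeval x) ((hermite n).map (Int.castRingHom ℝ)) = (aeval x) (hermite n) := by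
      simp [Polynomial.aeval_def, Polynomial.eval₂_eq_eval_map, Polynomial.map_map]
    rw [this]
    ring
  rw [this]
  exact integrable_poly_gaussian _ (by norm_num)

lemma differentiable_deriv_gss (n : ℕ) : Differentiable ℝ (deriv^[n] gss) := by
  rw [deriv_gss]
  apply Differentiable.mul
  · exact ((Polynomial.differentiable_aeval _).const_mul _)
  · exact Differentiable.exp (by fun_prop)

lemma ibp_chain (n : ℕ) : ∀ p : ℝ[X],
    ∫ x : ℝ, aeval x p * deriv^[n] gss x
      = (-1:ℝ)^n * ∫ x : ℝ, aeval x (derivative^[n] p) * gss x := by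
  induction n with
  | zero => intro p; simp
  | succ n ih =>
    intro p
    have hu : ∀ x : ℝ, HasDerivAt (fun y => aeval y p) (aeval x (derivative p)) x :=
      fun x => p.hasDerivAt_aeval x
    have hv : ∀ x : ℝ, HasDerivAt (deriv^[n] gss) (deriv^[n+1] gss x) x := by
      intro x
      rw [Function.iterate_succ_apply']
      exact ((differentiable_deriv_gss n) x).hasDerivAt
    have key := integral_mul_deriv_eq_deriv_mul_of_integrable (fun x _ => hu x) (fun x _ => hv x)
      (integrable_poly_deriv_gss p (n+1))
      (integrable_poly_deriv_gss (derivative p) n)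
      (integrable_poly_deriv_gss p n)
    rw [key, ih (derivative p), Function.iterate_succ_apply]
    push_cast [pow_succ]
    ring


lemma aeval_map_hermite (n : ℕ) (x : ℝ) :
    (aeval x) ((hermite n).map (Int.castRingHom ℝ)) = (aeval x) (hermite n) := by
  simp [Polynomial.aeval_def, Polynomial.eval₂_eq_eval_map, Polynomial.map_map]

lemma integral_gss : ∫ x : ℝ, gss x = Real.sqrt (2*π) := by
  simp_rw [gss_eq]
  rw [integral_gaussian]
  rw [show π / (1/2 : ℝ) = 2 * π by ring]

lemma hermite_orth (n : ℕ) :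
    ∫ x : ℝ, (aeval x (hermite n) : ℝ)^2 * gss x = n.factorial * Real.sqrt (2*π) := by
  have hneg : ((-1:ℝ)^n) * ((-1:ℝ)^n) = 1 := by
    rw [← pow_add, Even.neg_one_pow ⟨n, by ring⟩]
  have h1 : (fun x : ℝ => (aeval x (hermite n) : ℝ)^2 * gss x)
      = fun x => (-1:ℝ)^n *
        (aeval x ((hermite n).map (Int.castRingHom ℝ)) * deriv^[n] gss x) := by
    funext x
    rw [deriv_gss]
    simp only [aeval_map_hermite]
    linear_combination (-(aeval x (hermite n) : ℝ)^2 * gss x) * hneg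
  rw [h1, integral_const_mul, ibp_chain]
  have h2 : derivative^[n] ((hermite n).map (Int.castRingHom ℝ)) = C ((n.factorial : ℝ)) := by
    rw [iter_deriv_poly n _ (le_of_eq (((hermite_monic n).natDegree_map _).trans natDegree_hermite))]
    · rw [Polynomial.coeff_map]
      simp [coeff_hermite_self]
  rw [h2]
  simp_rw [aeval_C]
  rw [integral_const_mul, integral_gss, ← mul_assoc, ← mul_assoc, hneg, one_mul]
  simp


lemma deriv_iter_scaled (c : ℝ) (n : ℕ) :
    deriv^[n] (fun t => gss (c * t)) = fun x => c ^ n * deriv^[n] gss (c * x) := by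
  induction n with
  | zero => simp
  | succ n ih =>
    rw [Function.iterate_succ_apply', ih]
    funext x
    have h : HasDerivAt (fun y => deriv^[n] gss (c * y))
        (deriv (deriv^[n] gss) (c * x) * c) x := by
      have h2 : HasDerivAt (fun y : ℝ => c * y) c x := by
        simpa using (hasDerivAt_id x).const_mul c
      exact ((differentiable_deriv_gss n (c * x)).hasDerivAt).comp x h2
    rw [(h.const_mul (c ^ n)).deriv, Function.iterate_succ_apply']
    ring

lemma oneD {σ : ℝ} (hσ : 1 ≤ σ) (n : ℕ) :
    ∫ x : ℝ, (deriv^[n] (fun t => Real.exp (-σ^2 * t^2)) x)^2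
      ≤ σ ^ (2*(n:ℤ)-1) * (2^n * n.factorial * Real.sqrt π) := by
  have hσ0 : (0:ℝ) < σ := lt_of_lt_of_le one_pos hσ
  set c : ℝ := Real.sqrt 2 * σ with hc_def
  have hc : 0 < c := by positivity
  have hc2 : c ^ 2 = 2 * σ ^ 2 := by
    rw [hc_def, mul_pow, sq_sqrt (by norm_num : (2:ℝ) ≥ 0)]
  have hfun : (fun t : ℝ => Real.exp (-σ^2 * t^2)) = fun t => gss (c * t) := by
    funext t
    rw [gss_eq, mul_pow, hc2]
    ring_nf
  rw [hfun, deriv_iter_scaled]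
  set q : ℝ[X] := (((hermite n).map (Int.castRingHom ℝ)).comp (C c * X)) ^ 2 with hq_def
  have haq : ∀ x : ℝ, aeval x q = (aeval (c * x) (hermite n) : ℝ)^2 := by
    intro x
    rw [hq_def, map_pow, aeval_comp]
    simp [aeval_map_hermite]
  have hgsq : ∀ x : ℝ, gss (c * x) ^ 2 = Real.exp (-(2*σ^2) * x^2) := by
    intro x
    rw [gss_eq, ← Real.exp_nat_mul, mul_pow, hc2]
    norm_num
    ring_nf
  have hgss_cx : ∀ x : ℝ, gss (c * x) = Real.exp (-σ^2 * x^2) := by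
    intro x
    rw [gss_eq, mul_pow, hc2]
    ring_nf
  have hA : ∀ x : ℝ, (c ^ n * deriv^[n] gss (c * x))^2
      = c^(2*n) * (aeval x q * Real.exp (-(2*σ^2) * x^2)) := by
    intro x
    rw [deriv_gss]
    simp only [haq, ← hgsq x]
    have h1 : ((-1:ℝ)^n)^2 = 1 := by
      rw [← pow_mul, mul_comm, pow_mul]
      norm_num
    calc (c ^ n * ((-1:ℝ)^n * aeval (c*x) (hermite n) * gss (c*x)))^2
        = (((-1:ℝ)^n)^2) * (c^(2*n) * ((aeval (c*x) (hermite n):ℝ)^2 * gss (c*x)^2)) := by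
          rw [pow_mul]; ring
      _ = c^(2*n) * ((aeval (c*x) (hermite n):ℝ)^2 * gss (c*x)^2) := by rw [h1, one_mul]
  simp_rw [hA]
  have hint1 : Integrable (fun x : ℝ => c^(2*n) * (aeval x q * Real.exp (-(2*σ^2) * x^2))) :=
    (integrable_poly_gaussian q (by positivity)).const_mul _
  have hint2 : Integrable (fun x : ℝ => c^(2*n) * (aeval x q * Real.exp (-σ^2 * x^2))) :=
    (integrable_poly_gaussian q (by positivity)).const_mul _
  have hmono : ∫ x : ℝ, c^(2*n) * (aeval x q * Real.exp (-(2*σ^2) * x^2))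
      ≤ ∫ x : ℝ, c^(2*n) * (aeval x q * Real.exp (-σ^2 * x^2)) := by
    apply integral_mono hint1 hint2
    intro x
    have hq0 : (0:ℝ) ≤ aeval x q := by rw [haq]; positivity
    have hexp : Real.exp (-(2*σ^2) * x^2) ≤ Real.exp (-σ^2 * x^2) := by
      apply Real.exp_le_exp.mpr
      nlinarith [sq_nonneg x, sq_nonneg σ]
    have h3 := mul_le_mul_of_nonneg_left hexp hq0
    dsimp only
    exact mul_le_mul_of_nonneg_left h3 (pow_nonneg hc.le _)
  refine le_trans hmono ?_
  have hrw : (fun x : ℝ => c^(2*n) * (aeval x q * Real.exp (-σ^2 * x^2)))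
      = fun x : ℝ => c^(2*n) * ((fun u : ℝ => (aeval u (hermite n) : ℝ)^2 * gss u) (c * x)) := by
    funext x
    simp only [haq, hgss_cx]
  rw [hrw, integral_const_mul, MeasureTheory.Measure.integral_comp_mul_left (fun u : ℝ => (aeval u (hermite n) : ℝ)^2 * gss u) c, hermite_orth,
    abs_of_pos (inv_pos.mpr hc), smul_eq_mul]
  apply le_of_eq
  have hzpow : σ ^ (2*(n:ℤ)-1) = σ ^ (2*n) * σ⁻¹ := by
    rw [show (2*(n:ℤ)-1) = ((2*n : ℕ) : ℤ) - 1 by push_cast; ring,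
      zpow_sub_one₀ (ne_of_gt hσ0), zpow_natCast]
  rw [hzpow]
  have hcc : c ^ (2*n) = 2^n * σ^(2*n) := by
    rw [pow_mul, hc2, mul_pow, ← pow_mul]
  have hs2 : Real.sqrt (2*π) = Real.sqrt 2 * Real.sqrt π :=
    Real.sqrt_mul (by norm_num) π
  rw [hcc, hs2, hc_def, mul_inv]
  have hsqrt2 : Real.sqrt 2 ≠ 0 := by positivity
  field_simp


end Aux

lemma prod_update_eq {d : ℕ} (i : Fin d) (h : Fin d → ℝ → ℝ) (x : Fin d → ℝ) (t : ℝ) :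
    ∏ j, h j (Function.update x i t j)
      = h i t * ∏ j ∈ Finset.univ.erase i, h j (x j) := by
  rw [← Finset.mul_prod_erase Finset.univ _ (Finset.mem_univ i), Function.update_self]
  congr 1
  apply Finset.prod_congr rfl
  intro j hj
  rw [Function.update_of_ne (Finset.ne_of_mem_erase hj)]

lemma pderiv'_prod {d : ℕ} (i : Fin d) (h : Fin d → ℝ → ℝ) :
    pderiv' i (fun x => ∏ j, h j (x j))
      = fun x => ∏ j, Function.update h i (deriv (h i)) j (x j) := by
  funext x
  unfold pderiv'
  have key : (fun t => ∏ j, h j (Function.update x i t j))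
      = fun t => h i t * ∏ j ∈ Finset.univ.erase i, h j (x j) := by
    funext t; exact prod_update_eq i h x t
  rw [key, deriv_mul_const_field]
  have : ∏ j, Function.update h i (deriv (h i)) j (x j)
      = deriv (h i) (x i) * ∏ j ∈ Finset.univ.erase i, Function.update h i (deriv (h i)) j (x j) := by
    rw [← Finset.mul_prod_erase Finset.univ _ (Finset.mem_univ i), Function.update_self]
  rw [this]
  congr 1
  apply Finset.prod_congr rfl
  intro j hj
  rw [Function.update_of_ne (Finset.ne_of_mem_erase hj)]

lemma pderiv'_iter_prod {d : ℕ} (i : Fin d) (k : ℕ) (h : Fin d → ℝ → ℝ) :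
    (pderiv' i)^[k] (fun x => ∏ j, h j (x j))
      = fun x => ∏ j, Function.update h i (deriv^[k] (h i)) j (x j) := by
  induction k with
  | zero => simp [Function.update_eq_self]
  | succ k ih =>
    rw [Function.iterate_succ_apply', ih, pderiv'_prod]
    funext x
    apply Finset.prod_congr rfl
    intro j _
    rcases eq_or_ne j i with rfl | hne
    · rw [Function.update_self, Function.update_self, Function.update_self,
        ← Function.iterate_succ_apply' deriv]
    · rw [Function.update_of_ne hne, Function.update_of_ne hne, Function.update_of_ne hne]

lemma foldr_prod {d : ℕ} (α : Fin d → ℕ) (h : Fin d → ℝ → ℝ) :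
    ∀ L : List (Fin d), L.Nodup →
    L.foldr (fun i g => (pderiv' i)^[α i] g) (fun x => ∏ j, h j (x j))
      = fun x => ∏ j, (if j ∈ L then deriv^[α j] (h j) else h j) (x j) := by
  intro L
  induction L with
  | nil => intro _; simp
  | cons i L ih =>
    intro hnd
    rw [List.nodup_cons] at hnd
    have hiL : i ∉ L := hnd.1
    rw [List.foldr_cons, ih hnd.2]
    rw [pderiv'_iter_prod i (α i) (fun j' => if j' ∈ L then deriv^[α j'] (h j') else h j')]
    funext x
    apply Finset.prod_congr rfl
    intro j _
    rcases eq_or_ne j i with rfl | hne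
    · rw [Function.update_self, if_neg hiL, if_pos List.mem_cons_self]
    · rw [Function.update_of_ne hne]
      simp only [List.mem_cons, hne, false_or]

lemma mderiv_prod {d : ℕ} (α : Fin d → ℕ) (h : Fin d → ℝ → ℝ) :
    mderiv α (fun x => ∏ j, h j (x j)) = fun x => ∏ j, deriv^[α j] (h j) (x j) := by
  unfold mderiv
  rw [foldr_prod α h (List.finRange d) (List.nodup_finRange d)]
  funext x
  apply Finset.prod_congr rfl
  intro j _
  rw [if_pos (List.mem_finRange j)]


lemma zpow_sum' {ι : Type*} {a : ℝ} (ha : a ≠ 0) (s : Finset ι) (k : ι → ℤ) :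
    a ^ (∑ i ∈ s, k i) = ∏ i ∈ s, a ^ k i := by
  classical
  induction s using Finset.induction with
  | empty => simp
  | insert a s h ih => rw [Finset.sum_insert h, Finset.prod_insert h, zpow_add₀ ha, ih]

/-- For every `σ ≥ 1` and every multi-index `α ∈ ℕ^d`,
`∫_{ℝ^d} |D^α_x(e^{-σ²|x|²})|² dx ≤ σ^{2|α| - d} 2^{|α|} α! π^{d/2}`. -/
theorem gaussian_deriv_scaled_bound (d : ℕ) (σ : ℝ) (hσ : 1 ≤ σ) (α : Fin d → ℕ) :
    ∫ x : Fin d → ℝ, (mderiv α (fun x => Real.exp (-σ ^ 2 * ∑ i, (x i) ^ 2)) x) ^ 2 ≤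
      σ ^ (2 * (∑ i, α i : ℤ) - d) * 2 ^ (∑ i, α i) *
        (∏ i, (Nat.factorial (α i) : ℝ)) * π ^ ((d : ℝ) / 2) := by
  have hσ0 : (0:ℝ) < σ := lt_of_lt_of_le one_pos hσ
  have hF : (fun x : Fin d → ℝ => Real.exp (-σ ^ 2 * ∑ i, (x i) ^ 2))
      = fun x => ∏ j, (fun t : ℝ => Real.exp (-σ^2 * t^2)) (x j) := by
    funext x
    rw [Finset.mul_sum, Real.exp_sum]
  rw [hF, mderiv_prod α (fun _ => fun t : ℝ => Real.exp (-σ^2 * t^2))]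
  have hsq : ∀ x : Fin d → ℝ,
      (∏ j, deriv^[α j] (fun t : ℝ => Real.exp (-σ^2 * t^2)) (x j))^2
      = ∏ j, (fun y : ℝ => (deriv^[α j] (fun t : ℝ => Real.exp (-σ^2 * t^2)) y)^2) (x j) := by
    intro x
    rw [Finset.prod_pow]
  simp_rw [hsq]
  rw [MeasureTheory.integral_fintype_prod_volume_eq_prod
    (fun j (y : ℝ) => (deriv^[α j] (fun t : ℝ => Real.exp (-σ^2 * t^2)) y)^2)]
  have step : ∏ j, ∫ y : ℝ, (deriv^[α j] (fun t : ℝ => Real.exp (-σ^2 * t^2)) y)^2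
      ≤ ∏ j, σ ^ (2*((α j):ℤ)-1) * (2^(α j) * (α j).factorial * Real.sqrt π) := by
    apply Finset.prod_le_prod
    · intro j _
      exact integral_nonneg fun y => sq_nonneg _
    · intro j _
      exact oneD hσ (α j)
  refine le_trans step (le_of_eq ?_)
  have h1 : ∏ j, σ ^ (2*((α j):ℤ)-1) * (2^(α j) * ((α j).factorial : ℝ) * Real.sqrt π)
      = (∏ j, σ ^ (2*((α j):ℤ)-1)) * ((∏ j, (2:ℝ)^(α j)) * (∏ j, ((α j).factorial : ℝ))
          * (Real.sqrt π)^d) := by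
    rw [Finset.prod_mul_distrib, Finset.prod_mul_distrib, Finset.prod_mul_distrib,
      Finset.prod_const, Finset.card_univ, Fintype.card_fin]
  rw [h1]
  have h2 : ∏ j, σ ^ (2*((α j):ℤ)-1) = σ ^ (2 * (∑ i, α i : ℤ) - d) := by
    rw [← zpow_sum' (ne_of_gt hσ0)]
    congr 1
    rw [Finset.sum_sub_distrib, ← Finset.mul_sum, Finset.sum_const, Finset.card_univ,
      Fintype.card_fin]
    ring
  have h3 : ∏ j, (2:ℝ)^(α j) = 2 ^ (∑ i, α i) := by
    rw [← Finset.prod_pow_eq_pow_sum]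
  have h4 : (Real.sqrt π)^d = π ^ ((d:ℝ)/2) := by
    rw [Real.sqrt_eq_rpow, ← Real.rpow_natCast (π ^ ((1:ℝ)/2)) d, ← Real.rpow_mul pi_pos.le]
    congr 1
    ring
  rw [h2, h3, h4]
  ring
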